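/- Let u, v be hermitian functionals not in Δ with Carathéodory series F, G, and let L, M be Laurent polynomials satisfying the symmetry (z^p L_*, z^p M_*) = (L, M) for some p ∈ ℤ. Then u·L = v·M holds if and only if there exists a Laurent polynomial C with F·L = G·M + C and z^p·C_* = −C. -/

import Mathlib

open LaurentPolynomial Complex Polynomial

noncomputable section

abbrev LP := LaurentPolynomial ℂ
abbrev Func := LP →ₗ[ℂ] ℂ

/-- The coefficients of a Laurent polynomial, as a finitely supported function on `ℤ`. -/
def coeF (L : LP) : ℤ →₀ ℂ := L.coeff

/-- The modified functional `u·L`, defined by `(u·L)[f] = u[L·f]`. -/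
def smulF (u : Func) (L : LP) : Func := u ∘ₗ LinearMap.mulLeft ℂ L

/-- The moments `μ_n = u[zⁿ]`. -/
def moment (u : Func) (n : ℤ) : ℂ := u (T n)

/-- A functional is hermitian if `μ_{-n} = conj μ_n`. -/
def IsHermitian (u : Func) : Prop := ∀ n : ℤ, moment u (-n) = (starRingEnd ℂ) (moment u n)

/-- The Carathéodory formal series `F(z) = μ₀ + 2 Σ_{n≥1} μ_{-n} zⁿ`, as coefficients. -/
def CS (u : Func) : ℤ → ℂ := fun n => if n = 0 then moment u 0 else if 0 < n then 2 * moment u (-n) else 0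

/-- The Laurent formal series `L[u](z) = Σ_{n∈ℤ} μ_{-n} zⁿ`, as coefficients. -/
def LS (u : Func) : ℤ → ℂ := fun n => moment u (-n)

/-- `H_*(z) = conj (H (1/conj z))`, coefficient-wise. -/
def starS (H : ℤ → ℂ) : ℤ → ℂ := fun n => (starRingEnd ℂ) (H (-n))

/-- Product of a formal doubly-infinite series with a Laurent polynomial. -/
def mulS (H : ℤ → ℂ) (L : LP) : ℤ → ℂ := fun n => (coeF L).sum fun k c => c * H (n - k)

/-- The `*` operation on Laurent polynomials: `L_*(z) = conj (L (1/conj z))`. -/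
def starLP (L : LP) : LP :=
  AddMonoidAlgebra.ofCoeff (Finsupp.equivMapDomain (Equiv.neg ℤ)
    (Finsupp.mapRange (starRingEnd ℂ) (map_zero _) (coeF L)) : ℤ →₀ ℂ)

/-- A Laurent polynomial as a formal series. -/
def polyS (N : LP) : ℤ → ℂ := fun n => coeF N n

/-- The Lebesgue functional `leb[zⁿ] = δ_{n,0}`. -/
def lebF : Func := (Finsupp.lapply (0 : ℤ) : (ℤ →₀ ℂ) →ₗ[ℂ] ℂ) ∘ₗ
  (AddMonoidAlgebra.coeffLinearEquiv ℂ : LP ≃ₗ[ℂ] ℤ →₀ ℂ).toLinearMap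

/-- The Dirac delta at `z = 1`: evaluation at `1`. -/
def delta1 : Func := (Finsupp.lsum ℂ (fun _ : ℤ => (LinearMap.id : ℂ →ₗ[ℂ] ℂ)) : (ℤ →₀ ℂ) →ₗ[ℂ] ℂ) ∘ₗ
  (AddMonoidAlgebra.coeffLinearEquiv ℂ : LP ≃ₗ[ℂ] ℤ →₀ ℂ).toLinearMap

/-- `P* (z) = z^q conj(P(1/conj z))` with `q` given: conjugate coefficients and reflect at `q`. -/
def starDeg (q : ℕ) (P : Polynomial ℂ) : Polynomial ℂ := Polynomial.reflect q (P.map (starRingEnd ℂ))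

/-- The class `Δ` of hermitian functionals annihilated by a nonzero Laurent polynomial. -/
def InDelta (u : Func) : Prop := IsHermitian u ∧ ∃ N : LP, N ≠ 0 ∧ smulF u N = 0
namespace Stmt10Aux

lemma coeF_Tmul (Q : LP) (p n : ℤ) : coeF (T p * Q) n = coeF Q (n - p) := by
  have h := AddMonoidAlgebra.coeff_single_mul_apply Q (1:ℂ) p n
  rw [one_mul, neg_add_eq_sub] at h
  exact h

lemma coeF_neg (Q : LP) (n : ℤ) : coeF (-Q) n = - coeF Q n := rfl

lemma coeF_starLP (Q : LP) (n : ℤ) :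
    coeF (starLP Q) n = (starRingEnd ℂ) (coeF Q (-n)) := by
  simp [starLP, coeF, Finsupp.equivMapDomain_apply]

lemma symm_coe {Q : LP} {p : ℤ} (h : T p * starLP Q = Q) (n : ℤ) :
    coeF Q n = (starRingEnd ℂ) (coeF Q (p - n)) := by
  conv_lhs => rw [← h]
  rw [coeF_Tmul, coeF_starLP, neg_sub]

lemma apply_single (u : Func) (k : ℤ) (c : ℂ) :
    u (AddMonoidAlgebra.single k c : LP) = c * moment u k := by
  have h : (AddMonoidAlgebra.single k c : LP) = c • T k := by
    rw [T, AddMonoidAlgebra.smul_single, smul_eq_mul, mul_one]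
  rw [h, map_smul, smul_eq_mul, moment]

lemma apply_mul_T (u : Func) (L : LP) (m : ℤ) :
    u (L * T m) = (coeF L).sum fun k c => c * moment u (k + m) := by
  have hL : L * T m = (coeF L).sum fun k c => (AddMonoidAlgebra.single (k + m) c : LP) := by
    have h1 : L = ((coeF L).sum fun k c => (AddMonoidAlgebra.single k c : LP)) :=
      (AddMonoidAlgebra.sum_coeff_single L).symm
    conv_lhs => rw [h1]
    rw [Finsupp.sum, Finsupp.sum, Finset.sum_mul]
    refine Finset.sum_congr rfl fun k _ => ?_
    have h2 := AddMonoidAlgebra.single_mul_single (R := ℂ) (M := ℤ)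
      k m ((coeF L) k) 1
    rw [mul_one] at h2
    exact h2
  rw [hL, Finsupp.sum, map_sum, Finsupp.sum]
  exact Finset.sum_congr rfl fun k _ => apply_single u _ _

end Stmt10Aux
namespace Stmt10Aux

lemma CS_conj (u : Func) (hu : IsHermitian u) (m : ℤ) :
    (starRingEnd ℂ) (CS u m) + CS u (-m) = 2 * moment u m := by
  rcases lt_trichotomy m 0 with h | h | h
  · have h1 : CS u m = 0 := by simp [CS, h.ne, not_lt.2 h.le]
    have h2 : CS u (-m) = 2 * moment u m := by
      simp [CS, neg_eq_zero, h.ne, neg_pos.mpr h, not_le.mpr h]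
    simp [h1, h2]
  · subst h
    have := hu 0
    rw [neg_zero] at this
    simp [CS, ← this]
    ring
  · have h1 : CS u m = 2 * moment u (-m) := by simp [CS, h.ne', h]
    have h2 : CS u (-m) = 0 := by
      have : ¬ (0 < -m) := by omega
      simp [CS, neg_eq_zero, h.ne', this, not_lt.mpr h.le]
    have h3 : (starRingEnd ℂ) (moment u (-m)) = moment u m := by
      rw [hu m]
      exact Complex.conj_conj _
    rw [h1, h2, map_mul, h3, add_zero]
    rw [show ((starRingEnd ℂ) (2:ℂ)) = 2 from Complex.conj_ofNat 2]
lemma conj_mulS (u : Func) (hu : IsHermitian u) (L : LP) (p : ℤ)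
    (hL : T p * starLP L = L) (n : ℤ) :
    (starRingEnd ℂ) (mulS (CS u) L (p - n)) + mulS (CS u) L n
      = 2 * (coeF L).sum fun k c => c * moment u (k - n) := by
  have hsym := symm_coe hL
  have hsym' : ∀ j, (starRingEnd ℂ) (coeF L j) = coeF L (p - j) := by
    intro j
    rw [hsym j, Complex.conj_conj]
  have hsupp : ∀ k ∈ (coeF L).support, p - k ∈ (coeF L).support := by
    intro k hk
    rw [Finsupp.mem_support_iff] at hk ⊢
    intro hzero
    exact hk (by rw [hsym k, hzero, map_zero])
  have hconj : (starRingEnd ℂ) (mulS (CS u) L (p - n))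
      = ∑ k ∈ (coeF L).support, coeF L k * (starRingEnd ℂ) (CS u (k - n)) := by
    rw [mulS, Finsupp.sum, map_sum]
    refine Finset.sum_nbij' (i := fun k => p - k) (j := fun k => p - k)
      hsupp hsupp (fun a _ => by ring) (fun a _ => by ring) ?_
    intro k hk
    rw [map_mul, hsym' k]
    congr 2
    ring
  rw [hconj, mulS, Finsupp.sum, ← Finset.sum_add_distrib, Finsupp.sum, Finset.mul_sum]
  refine Finset.sum_congr rfl fun k _ => ?_
  have := CS_conj u hu (k - n)
  rw [neg_sub] at this
  rw [← mul_add, this]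
  ring
lemma sum_sub_eq (u : Func) (L : LP) (n : ℤ) :
    ((coeF L).sum fun k c => c * moment u (k - n)) = u (L * T (-n)) := by
  rw [apply_mul_T]
  exact Finsupp.sum_congr fun k _ => by rw [sub_eq_add_neg]

lemma mulS_low (u : Func) (L : LP) (n : ℤ)
    (h : ∀ k ∈ (coeF L).support, n < k) : mulS (CS u) L n = 0 := by
  rw [mulS, Finsupp.sum]
  refine Finset.sum_eq_zero fun k hk => ?_
  have hlt := h k hk
  have : CS u (n - k) = 0 := by
    simp [CS, show n - k ≠ 0 by omega, show ¬ (0 < n - k) by omega, not_lt.mpr hlt.le]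
  rw [this, mul_zero]

lemma mulS_high (u : Func) (L : LP) (n : ℤ)
    (h : ∀ k ∈ (coeF L).support, k < n) :
    mulS (CS u) L n = 2 * u (L * T (-n)) := by
  rw [apply_mul_T, mulS, Finsupp.sum, Finsupp.sum, Finset.mul_sum]
  refine Finset.sum_congr rfl fun k hk => ?_
  have hlt := h k hk
  have : CS u (n - k) = 2 * moment u (k - n) := by
    simp only [CS, if_neg (show ¬ (n - k = 0) by omega), if_pos (show 0 < n - k by omega),
      neg_sub]
  rw [this, show k + -n = k - n by ring]
  ring

lemma conj_coe {C : LP} {p : ℤ} (h : T p * starLP C = -C) (j : ℤ) :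
    (starRingEnd ℂ) (coeF C (p - j)) = - coeF C j := by
  have := congrArg (fun X : LP => coeF X j) h
  rw [coeF_Tmul, coeF_starLP, neg_sub, coeF_neg] at this
  exact this

end Stmt10Aux
open Stmt10Aux

/-- for hermitian `u, v ∉ Δ` and a symmetric pair
`(z^p L_*, z^p M_*) = (L, M)`, one has `u·L = v·M` iff `F·L = G·M + C` for some Laurent
polynomial `C` with `z^p C_* = -C`. -/
theorem stmt10 (u v : Func) (hu : IsHermitian u) (hv : IsHermitian v)
    (hud : ¬ InDelta u) (hvd : ¬ InDelta v)
    (L M : LP) (p : ℤ)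
    (hLs : T p * starLP L = L) (hMs : T p * starLP M = M) :
    smulF u L = smulF v M ↔
      ∃ C : LP, mulS (CS u) L = (fun n => mulS (CS v) M n + coeF C n) ∧
        T p * starLP C = -C := by
  classical
  constructor
  · intro hmain
    have hpt : ∀ m : ℤ, u (L * T m) = v (M * T m) := by
      intro m
      have := LinearMap.congr_fun hmain (T m)
      simpa [smulF] using this
    set D : ℤ → ℂ := fun n => mulS (CS u) L n - mulS (CS v) M n with hD
    set s : Finset ℤ := insert 0 ((coeF L).support ∪ (coeF M).support) with hs
    have hsne : s.Nonempty := ⟨0, Finset.mem_insert_self _ _⟩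
    have hLsub : (coeF L).support ⊆ s :=
      fun k hk => Finset.mem_insert_of_mem (Finset.mem_union_left _ hk)
    have hMsub : (coeF M).support ⊆ s :=
      fun k hk => Finset.mem_insert_of_mem (Finset.mem_union_right _ hk)
    have hDz : ∀ n ∉ Finset.Icc (s.min' hsne) (s.max' hsne), D n = 0 := by
      intro n hn
      rw [Finset.mem_Icc, not_and_or, not_le, not_le] at hn
      rcases hn with hn | hn
      · have hu0 : mulS (CS u) L n = 0 :=
          mulS_low _ _ _ fun k hk => lt_of_lt_of_le hn (Finset.min'_le _ _ (hLsub hk))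
        have hv0 : mulS (CS v) M n = 0 :=
          mulS_low _ _ _ fun k hk => lt_of_lt_of_le hn (Finset.min'_le _ _ (hMsub hk))
        simp [hD, hu0, hv0]
      · have hu2 := mulS_high u L n fun k hk =>
          lt_of_le_of_lt (Finset.le_max' _ _ (hLsub hk)) hn
        have hv2 := mulS_high v M n fun k hk =>
          lt_of_le_of_lt (Finset.le_max' _ _ (hMsub hk)) hn
        simp [hD, hu2, hv2, hpt (-n)]
    refine ⟨AddMonoidAlgebra.ofCoeff (Finsupp.onFinset (Finset.Icc (s.min' hsne) (s.max' hsne)) D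
      (fun n hn => by by_contra hmem; exact hn (hDz n hmem)) : ℤ →₀ ℂ), ?_, ?_⟩
    · funext n
      have hc : coeF (AddMonoidAlgebra.ofCoeff (Finsupp.onFinset (Finset.Icc (s.min' hsne) (s.max' hsne)) D
          (fun n hn => by by_contra hmem; exact hn (hDz n hmem))) : LP) n = D n :=
        Finsupp.onFinset_apply (hf := fun n hn => by by_contra hmem; exact hn (hDz n hmem))
      rw [hc, hD]
      ring
    · refine AddMonoidAlgebra.coeff_injective <| Finsupp.ext fun n => ?_
      show coeF (T p * starLP _) n = coeF (-(AddMonoidAlgebra.ofCoeff (Finsupp.onFinset _ D _) : LP)) n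
      rw [coeF_Tmul, coeF_starLP, neg_sub, coeF_neg]
      have hc : ∀ j, coeF (AddMonoidAlgebra.ofCoeff (Finsupp.onFinset (Finset.Icc (s.min' hsne) (s.max' hsne)) D
          (fun n hn => by by_contra hmem; exact hn (hDz n hmem))) : LP) j = D j :=
        fun j => Finsupp.onFinset_apply (hf := fun n hn => by by_contra hmem; exact hn (hDz n hmem))
      rw [hc, hc]
      have hcu := conj_mulS u hu L p hLs n
      have hcv := conj_mulS v hv M p hMs n
      have hS : ((coeF L).sum fun k c => c * moment u (k - n))
          = ((coeF M).sum fun k c => c * moment v (k - n)) := by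
        rw [sum_sub_eq, sum_sub_eq]; exact hpt (-n)
      rw [hD]
      simp only [map_sub]
      linear_combination hcu - hcv + 2 * hS
  · rintro ⟨C, h1, h2⟩
    have key : ∀ m : ℤ, u (L * T m) = v (M * T m) := by
      intro m
      have hcu := conj_mulS u hu L p hLs (-m)
      have hcv := conj_mulS v hv M p hMs (-m)
      rw [sum_sub_eq, neg_neg] at hcu hcv
      have h1a := congrArg (starRingEnd ℂ) (congrFun h1 (p - -m))
      rw [map_add] at h1a
      have h1b := congrFun h1 (-m)
      have hC := conj_coe h2 (-m)
      linear_combination (hcv - hcu + h1a + h1b + hC) / 2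
    refine AddMonoidAlgebra.lhom_ext' fun a => LinearMap.ext fun b => ?_
    have hsingle : (AddMonoidAlgebra.single a b : LP) = b • T a := by
      rw [T, AddMonoidAlgebra.smul_single, smul_eq_mul, mul_one]
    show smulF u L (AddMonoidAlgebra.single a b : LP) = smulF v M (AddMonoidAlgebra.single a b : LP)
    simp only [smulF, LinearMap.coe_comp, Function.comp_apply, LinearMap.mulLeft_apply,
      hsingle, mul_smul_comm, map_smul]
    rw [key a]
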